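/- For 0 < s < 1 and w in the open right half-plane (Re w > 0), the diagonal value of the kernel is K_s(w,w) = (Γ(1-s)/Γ(1-s/2)²) · (Re w)^{-s} = 2^{-s}·(Γ((1-s)/2)/(√π·Γ(1-s/2)))·(Re w)^{-s}; in particular K_s(w,w) is finite. -/

import Mathlib

open Real MeasureTheory Set intervalIntegral

lemma rkAux_cpow_eq_ofReal {a b x : ℝ} (hx : 0 ≤ x) (hx1 : x ≤ 1) :
    (x : ℂ) ^ ((a : ℂ) - 1) * (1 - (x : ℂ)) ^ ((b : ℂ) - 1)
      = ((x ^ (a - 1) * (1 - x) ^ (b - 1) : ℝ) : ℂ) := by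
  rw [Complex.ofReal_mul, Complex.ofReal_cpow hx, Complex.ofReal_cpow (by linarith)]
  push_cast
  ring_nf

lemma rkAux_realBeta_integrable {a b : ℝ} (ha : 0 < a) (hb : 0 < b) :
    IntervalIntegrable (fun x : ℝ => x ^ (a - 1) * (1 - x) ^ (b - 1)) volume 0 1 := by
  have h := (Complex.betaIntegral_convergent (u := (a : ℂ)) (v := (b : ℂ))
    (by simpa using ha) (by simpa using hb)).norm
  rw [intervalIntegrable_iff] at h ⊢
  refine h.congr ?_
  filter_upwards [ae_restrict_mem measurableSet_uIoc] with x hx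
  rw [uIoc_of_le zero_le_one] at hx
  rw [rkAux_cpow_eq_ofReal hx.1.le hx.2, Complex.norm_real,
    Real.norm_of_nonneg (mul_nonneg (Real.rpow_nonneg hx.1.le _)
      (Real.rpow_nonneg (by linarith [hx.2]) _))]

lemma rkAux_realBeta_eq {a b : ℝ} (ha : 0 < a) (hb : 0 < b) :
    ∫ x in (0:ℝ)..1, x ^ (a - 1) * (1 - x) ^ (b - 1)
      = Real.Gamma a * Real.Gamma b / Real.Gamma (a + b) := by
  have key := Complex.Gamma_mul_Gamma_eq_betaIntegral (s := (a : ℂ)) (t := (b : ℂ))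
    (by simpa using ha) (by simpa using hb)
  rw [Complex.betaIntegral] at key
  have h2 : (∫ x : ℝ in (0:ℝ)..1, (x : ℂ) ^ ((a : ℂ) - 1) * (1 - (x : ℂ)) ^ ((b : ℂ) - 1))
      = ((∫ x in (0:ℝ)..1, x ^ (a - 1) * (1 - x) ^ (b - 1) : ℝ) : ℂ) := by
    rw [← intervalIntegral.integral_ofReal]
    refine intervalIntegral.integral_congr fun x hx => ?_
    rw [uIcc_of_le zero_le_one] at hx
    exact rkAux_cpow_eq_ofReal hx.1 hx.2
  rw [h2, ← Complex.ofReal_add, Complex.Gamma_ofReal, Complex.Gamma_ofReal,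
    Complex.Gamma_ofReal, ← Complex.ofReal_mul, ← Complex.ofReal_mul,
    Complex.ofReal_inj] at key
  have hG : Real.Gamma (a + b) ≠ 0 := (Real.Gamma_pos_of_pos (by linarith)).ne'
  field_simp [key]
  rw [key]; ring

lemma rkAux_sin_subst {s : ℝ} (hs0 : 0 < s) (hs1 : s < 1) :
    IntervalIntegrable (fun t => Real.sin t ^ (-s)) volume 0 (π / 2) ∧
    (2 : ℝ) * ∫ t in (0:ℝ)..(π / 2), Real.sin t ^ (-s)
      = ∫ x in (0:ℝ)..1, x ^ ((1 - s) / 2 - 1) * (1 - x) ^ ((1 / 2 : ℝ) - 1) := by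
  set a : ℝ := (1 - s) / 2 with ha_def
  set b : ℝ := (1 / 2 : ℝ) with hb_def
  have ha : 0 < a := by rw [ha_def]; linarith
  have hb : 0 < b := by norm_num [hb_def]
  set g : ℝ → ℝ := fun x => x ^ (a - 1) * (1 - x) ^ (b - 1) with hg_def
  set f : ℝ → ℝ := fun t => Real.sin t ^ 2 with hf_def
  set f' : ℝ → ℝ := fun t => 2 * Real.sin t * Real.cos t with hf'_def
  have hpi2 : 0 < π / 2 := by positivity
  have hderiv : ∀ t, HasDerivAt f (f' t) t := by
    intro t
    have := (Real.hasDerivAt_sin t).pow 2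
    show HasDerivAt (fun t => Real.sin t ^ 2) (2 * Real.sin t * Real.cos t) t
    exact this.congr_deriv (by norm_num)
  have hsinmem : ∀ t ∈ Ioo (0:ℝ) (π / 2), 0 < Real.sin t ∧ Real.sin t < 1 := by
    intro t ht
    refine ⟨Real.sin_pos_of_pos_of_lt_pi ht.1 (by linarith [Real.pi_pos, ht.2]), ?_⟩
    have h1 : Real.sin t < Real.sin (π / 2) :=
      Real.strictMonoOn_sin ⟨by linarith [ht.1], by linarith [ht.2]⟩
        ⟨by linarith, le_refl _⟩ ht.2
    simpa using h1
  have him : f '' Ioo 0 (π / 2) ⊆ Ioo 0 1 := by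
    rintro y ⟨t, ht, rfl⟩
    obtain ⟨h1, h2⟩ := hsinmem t ht
    simp only [hf_def]
    exact ⟨by positivity, by nlinarith⟩
  have hginteg : IntegrableOn g (Icc (0:ℝ) 1) := by
    have := (rkAux_realBeta_integrable ha hb)
    rwa [intervalIntegrable_iff', uIcc_of_le zero_le_one] at this
  have hinj : InjOn f (Ioo 0 (π / 2)) := by
    have hmono : StrictMonoOn f (Ioo 0 (π / 2)) := by
      intro x hx y hy hxy
      have h1 : Real.sin x < Real.sin y :=
        Real.strictMonoOn_sin ⟨by linarith [hx.1], by linarith [hx.2]⟩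
          ⟨by linarith [hy.1], by linarith [hy.2]⟩ hxy
      have h0 := (hsinmem x hx).1
      simp only [hf_def]
      nlinarith
    exact hmono.injOn
  have hg2' : IntegrableOn (fun t => |f' t| • g (f t)) (Ioo 0 (π / 2)) := by
    refine (integrableOn_image_iff_integrableOn_abs_deriv_smul measurableSet_Ioo
      (fun x _ => (hderiv x).hasDerivWithinAt) hinj g).mp ?_
    exact hginteg.mono_set (him.trans Ioo_subset_Icc_self)
  have hg2 : IntegrableOn (fun t => f' t • g (f t)) (Icc (0:ℝ) (π / 2)) := by
    rw [integrableOn_Icc_iff_integrableOn_Ioo]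
    refine hg2'.congr_fun (fun t ht => ?_) measurableSet_Ioo
    have h1 := (hsinmem t ht).1
    have h2 := Real.cos_pos_of_mem_Ioo (⟨by linarith [ht.1], ht.2⟩ : t ∈ Ioo (-(π/2)) (π/2))
    show |f' t| • g (f t) = f' t • g (f t)
    rw [abs_of_nonneg (show 0 ≤ f' t by simp only [hf'_def]; positivity)]
  have key : (∫ t in (0:ℝ)..(π / 2), f' t • (g ∘ f) t) = ∫ u in (f 0)..(f (π / 2)), g u := by
    refine integral_comp_smul_deriv''' ((Real.continuous_sin.pow 2).continuousOn) ?_ ?_ ?_ ?_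
    · intro x hx
      exact (hderiv x).hasDerivWithinAt
    · have hgc : ContinuousOn g (Ioo (0:ℝ) 1) := by
        refine ContinuousOn.mul ?_ ?_
        · exact continuousOn_id.rpow_const fun x hx => Or.inl hx.1.ne'
        · exact (continuousOn_const.sub continuousOn_id).rpow_const
            fun x hx => Or.inl (sub_ne_zero.mpr (ne_of_lt hx.2).symm)
      refine hgc.mono ?_
      rw [min_eq_left hpi2.le, max_eq_right hpi2.le]
      exact him
    · refine hginteg.mono_set ?_
      rintro y ⟨t, _, rfl⟩
      exact ⟨by positivity, by simpa [hf_def] using Real.sin_sq_le_one t⟩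
    · rwa [uIcc_of_le hpi2.le]
  have hae : ∀ᵐ t : ℝ ∂volume, t ≠ π / 2 := by
    refine MeasureTheory.ae_iff.mpr ?_
    simpa using measure_singleton (π / 2 : ℝ)
  have hptwise : ∀ t ∈ Ioo (0:ℝ) (π / 2), f' t • (g ∘ f) t = 2 * Real.sin t ^ (-s) := by
    intro t ht
    obtain ⟨h1, _⟩ := hsinmem t ht
    have h2 : 0 < Real.cos t :=
      Real.cos_pos_of_mem_Ioo ⟨by linarith [ht.1], ht.2⟩
    have e1 : (Real.sin t ^ 2 : ℝ) ^ (a - 1) = Real.sin t ^ (-1 - s) := by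
      rw [← Real.rpow_natCast (Real.sin t) 2, ← Real.rpow_mul h1.le]
      norm_num [ha_def]
      ring_nf
    have e2 : ((1 : ℝ) - Real.sin t ^ 2) ^ (b - 1) = (Real.cos t)⁻¹ := by
      rw [← Real.cos_sq' t, ← Real.rpow_natCast (Real.cos t) 2, ← Real.rpow_mul h2.le]
      norm_num [hb_def]
      exact Real.rpow_neg_one _
    have e3 : Real.sin t * Real.sin t ^ (-1 - s) = Real.sin t ^ (-s) := by
      nth_rewrite 1 [← Real.rpow_one (Real.sin t)]
      rw [← Real.rpow_add h1]
      congr 1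
      ring
    simp only [Function.comp, hf_def, hg_def, hf'_def, smul_eq_mul, e1, e2]
    field_simp
    nlinarith [e3]
  have haecong : ∀ᵐ t ∂volume, t ∈ Set.uIoc (0:ℝ) (π / 2) → f' t • (g ∘ f) t = 2 * Real.sin t ^ (-s) := by
    filter_upwards [hae] with t htne ht
    rw [uIoc_of_le hpi2.le] at ht
    exact hptwise t ⟨ht.1, lt_of_le_of_ne ht.2 htne⟩
  have hII : IntervalIntegrable (fun t => 2 * Real.sin t ^ (-s)) volume 0 (π / 2) := by
    rw [intervalIntegrable_iff]
    refine (hg2.mono_set ?_).congr ?_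
    · rw [uIoc_of_le hpi2.le]; exact Ioc_subset_Icc_self
    · exact (ae_restrict_iff' measurableSet_uIoc).mpr haecong
  have hI : IntervalIntegrable (fun t => Real.sin t ^ (-s)) volume 0 (π / 2) := by
    have := hII.const_mul (1 / 2 : ℝ)
    rw [intervalIntegrable_iff] at this ⊢
    refine this.congr (Filter.Eventually.of_forall fun t => ?_)
    ring
  refine ⟨hI, ?_⟩
  have heq : (∫ t in (0:ℝ)..(π / 2), f' t • (g ∘ f) t)
      = ∫ t in (0:ℝ)..(π / 2), 2 * Real.sin t ^ (-s) :=
    intervalIntegral.integral_congr_ae haecong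
  have hf0 : f 0 = 0 := by simp [hf_def]
  have hf1 : f (π / 2) = 1 := by simp [hf_def]
  rw [← intervalIntegral.integral_const_mul, ← heq, key, hf0, hf1]

lemma rkAux_sin_pi_integral {s : ℝ} (hs0 : 0 < s) (hs1 : s < 1) :
    ∫ t in (0:ℝ)..π, Real.sin t ^ (-s)
      = Real.Gamma ((1 - s) / 2) * Real.sqrt π / Real.Gamma (1 - s / 2) := by
  obtain ⟨hI, hval⟩ := rkAux_sin_subst hs0 hs1
  have hI2 : IntervalIntegrable (fun t => Real.sin t ^ (-s)) volume (π / 2) π := by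
    have h := hI.comp_sub_left π
    simp only [Real.sin_pi_sub] at h
    rw [show π - 0 = π by ring, show π - π / 2 = π / 2 by ring] at h
    exact h.symm
  have hrefl : (∫ t in (π/2:ℝ)..π, Real.sin t ^ (-s))
      = ∫ t in (0:ℝ)..(π/2), Real.sin t ^ (-s) := by
    have h := intervalIntegral.integral_comp_sub_left
      (a := π/2) (b := π) (fun x => Real.sin x ^ (-s)) π
    simp only [Real.sin_pi_sub] at h
    rw [show π - π = (0:ℝ) by ring, show π - π / 2 = π / 2 by ring] at h
    exact h
  have hsplit := intervalIntegral.integral_add_adjacent_intervals hI hI2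
  have hbeta := rkAux_realBeta_eq (a := (1 - s) / 2) (b := (1/2 : ℝ))
    (by linarith) (by norm_num)
  have harg : (1 - s) / 2 + (1/2 : ℝ) = 1 - s / 2 := by ring
  rw [harg, Real.Gamma_one_half_eq] at hbeta
  calc ∫ t in (0:ℝ)..π, Real.sin t ^ (-s)
      = (∫ t in (0:ℝ)..(π/2), Real.sin t ^ (-s))
        + ∫ t in (π/2:ℝ)..π, Real.sin t ^ (-s) := hsplit.symm
    _ = 2 * ∫ t in (0:ℝ)..(π/2), Real.sin t ^ (-s) := by rw [hrefl]; ring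
    _ = Real.Gamma ((1 - s) / 2) * Real.sqrt π / Real.Gamma (1 - s / 2) := by
        rw [hval, hbeta]


/-- The rotation-averaged Riesz `s`-kernel on the right half-plane:
`K_s(z,w) = (1/2π) ∫₀^{2π} (x² + u² - 2xu cos φ + (y-v)²)^{-s/2} dφ`,
where `z = x + iy`, `w = u + iv`. -/
noncomputable def rotKernel (s : ℝ) (z w : ℂ) : ℝ :=
  (1 / (2 * Real.pi)) * ∫ φ in (0:ℝ)..(2 * Real.pi),
    (z.re ^ 2 + w.re ^ 2 - 2 * z.re * w.re * Real.cos φ + (z.im - w.im) ^ 2) ^ (-(s / 2))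

/-- Diagonal value of the kernel: for `0 < s < 1` and `Re w > 0`,
`K_s(w,w) = Γ(1-s)/Γ(1-s/2)² (Re w)^{-s} = 2^{-s} Γ((1-s)/2)/(√π Γ(1-s/2)) (Re w)^{-s}`. -/
theorem rotKernel_diagonal (s : ℝ) (hs0 : 0 < s) (hs1 : s < 1) (w : ℂ) (hw : 0 < w.re) :
    rotKernel s w w
        = Real.Gamma (1 - s) / (Real.Gamma (1 - s / 2)) ^ 2 * w.re ^ (-s) ∧
    rotKernel s w w
        = (2 : ℝ) ^ (-s) * (Real.Gamma ((1 - s) / 2)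
            / (Real.sqrt Real.pi * Real.Gamma (1 - s / 2))) * w.re ^ (-s) := by
  have hKpi := rkAux_sin_pi_integral hs0 hs1
  have hGc : 0 < Real.Gamma (1 - s / 2) := Real.Gamma_pos_of_pos (by linarith)
  have hpos : (0:ℝ) < π := Real.pi_pos
  have hsq : Real.sqrt π * Real.sqrt π = π := Real.mul_self_sqrt hpos.le
  have hsπ : (0:ℝ) < Real.sqrt π := Real.sqrt_pos.mpr hpos
  have hpt : ∀ φ : ℝ,
      (w.re ^ 2 + w.re ^ 2 - 2 * w.re * w.re * Real.cos φ + (w.im - w.im) ^ 2) ^ (-(s / 2))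
      = w.re ^ (-s) * (4 * Real.sin (φ / 2) ^ 2) ^ (-(s / 2)) := by
    intro φ
    have h := Real.sin_sq_eq_half_sub (φ / 2)
    rw [show 2 * (φ / 2) = φ by ring] at h
    have hb : w.re ^ 2 + w.re ^ 2 - 2 * w.re * w.re * Real.cos φ + (w.im - w.im) ^ 2
        = w.re ^ 2 * (4 * Real.sin (φ / 2) ^ 2) := by rw [h]; ring
    rw [hb, Real.mul_rpow (by positivity) (by positivity),
      ← Real.rpow_natCast w.re 2, ← Real.rpow_mul hw.le]
    push_cast
    rw [show (2:ℝ) * -(s/2) = -s by ring]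
  have hstep1 : rotKernel s w w
      = (1 / (2 * π)) * (w.re ^ (-s)
          * ∫ φ in (0:ℝ)..(2 * π), (4 * Real.sin (φ / 2) ^ 2) ^ (-(s/2))) := by
    have h : (∫ φ in (0:ℝ)..(2 * π),
        (w.re ^ 2 + w.re ^ 2 - 2 * w.re * w.re * Real.cos φ + (w.im - w.im) ^ 2) ^ (-(s / 2)))
        = w.re ^ (-s) * ∫ φ in (0:ℝ)..(2 * π), (4 * Real.sin (φ / 2) ^ 2) ^ (-(s/2)) := by
      rw [← intervalIntegral.integral_const_mul]
      exact intervalIntegral.integral_congr fun φ _ => hpt φ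
    rw [rotKernel, h]
  have hstep2 : (∫ φ in (0:ℝ)..(2 * π), (4 * Real.sin (φ / 2) ^ 2) ^ (-(s/2)))
      = 2 * ∫ t in (0:ℝ)..π, (4 * Real.sin t ^ 2) ^ (-(s/2)) := by
    have h := intervalIntegral.integral_comp_div (a := 0) (b := 2 * π)
      (c := 2) (f := fun t => (4 * Real.sin t ^ 2) ^ (-(s/2))) two_ne_zero
    rw [show (0:ℝ)/2 = 0 by ring, show (2*π)/2 = π by ring] at h
    simpa [smul_eq_mul] using h
  have hstep3 : (∫ t in (0:ℝ)..π, (4 * Real.sin t ^ 2) ^ (-(s/2)))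
      = (2:ℝ) ^ (-s) * ∫ t in (0:ℝ)..π, Real.sin t ^ (-s) := by
    rw [← intervalIntegral.integral_const_mul]
    refine intervalIntegral.integral_congr fun t ht => ?_
    rw [uIcc_of_le hpos.le] at ht
    have hsin : 0 ≤ Real.sin t := Real.sin_nonneg_of_nonneg_of_le_pi ht.1 ht.2
    rw [Real.mul_rpow (by norm_num) (by positivity),
      show (4:ℝ) = 2 ^ (2:ℕ) by norm_num, ← Real.rpow_natCast (2:ℝ) 2,
      ← Real.rpow_mul (by norm_num : (0:ℝ) ≤ 2), ← Real.rpow_natCast (Real.sin t) 2,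
      ← Real.rpow_mul hsin]
    push_cast
    rw [show (2:ℝ) * -(s/2) = -s by ring]
  have hval : rotKernel s w w
      = (2 : ℝ) ^ (-s) * (Real.Gamma ((1 - s) / 2)
          / (Real.sqrt π * Real.Gamma (1 - s / 2))) * w.re ^ (-s) := by
    rw [hstep1, hstep2, hstep3, hKpi]
    field_simp
    have hGc2 : 0 < Real.Gamma ((2 - s) / 2) := by
      rw [show (2 - s) / 2 = 1 - s / 2 by ring]; exact hGc
    rw [div_eq_div_iff hGc2.ne' hGc2.ne']
    linear_combination (Real.Gamma ((1 - s) / 2) * Real.Gamma ((2 - s) / 2)) * hsq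
  refine ⟨?_, hval⟩
  rw [hval]
  have hdup := Real.Gamma_mul_Gamma_add_half ((1 - s) / 2)
  rw [show (1 - s) / 2 + 1 / 2 = 1 - s / 2 by ring,
    show 2 * ((1 - s) / 2) = 1 - s by ring,
    show 1 - (1 - s) = s by ring] at hdup
  have h2s : (2:ℝ) ^ (-s) * (2:ℝ) ^ s = 1 := by
    rw [← Real.rpow_add two_pos]; norm_num
  have hΓa : Real.Gamma ((1 - s) / 2)
      = Real.Gamma (1 - s) * (2:ℝ) ^ s * Real.sqrt π / Real.Gamma (1 - s / 2) := by
    rw [eq_div_iff hGc.ne']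
    linarith [hdup]
  rw [hΓa]
  set u := w.re ^ (-s) with hu_def
  set G1 := Real.Gamma (1 - s) with hG1_def
  set Gc := Real.Gamma (1 - s / 2) with hGc_def
  field_simp [hGc.ne', hsπ.ne']
  linear_combination (G1 * u) * h2s
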